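/- arXiv:1901.03481 — 2 statements merged into one kernel-verified Lean document; each statement's English description precedes it below -/
import Mathlib

section
/- Let α ∈ (0,1) and let ψ be the one-sided stable probability distribution of exponent α, i.e., the probability measure on [0,∞) whose characteristic function is φ(ξ) = exp(−|ξ|^α (1 − i·tan(πα/2)·sgn(ξ))). Let θ : ℕ → (0,∞) satisfy θ_n / n^{1/α} → ∞ as n → ∞. Then for every integer k ≥ 2 and every real t > 0, lim_{n→∞} f(k, n, t·θ_n) = 0. -/
open MeasureTheory Real Filter Topology

/-- `j`-fold convolution power of a measure on ℝ, with `convPow ψ 0 = δ₀`. -/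
noncomputable def convPow (ψ : Measure ℝ) : ℕ → Measure ℝ
  | 0 => Measure.dirac 0
  | (j + 1) => ((convPow ψ j).prod ψ).map (fun p => p.1 + p.2)

/-- `f(k, n, s) = Σ_{j=0}^∞ (1 − k/n)^j ∫_{[0,s]} ψ((s−u, ∞)) ψ^{*j}(du)`. -/
noncomputable def pauseF (ψ : Measure ℝ) (k n : ℕ) (s : ℝ) : ℝ :=
  ∑' j : ℕ, (1 - (k : ℝ) / n) ^ j *
    ∫ u in Set.Icc (0 : ℝ) s, (ψ (Set.Ioi (s - u))).toReal ∂(convPow ψ j)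

/-- characteristic function `φ(ξ) = ∫ e^{iξx} ψ(dx)`. -/
noncomputable def charFn (ψ : Measure ℝ) (ξ : ℝ) : ℂ :=
  ∫ x, Complex.exp (Complex.I * ξ * x) ∂ψ


lemma convPow_prob (ψ : Measure ℝ) [IsProbabilityMeasure ψ] (j : ℕ) :
    IsProbabilityMeasure (convPow ψ j) := by
  induction j with
  | zero => exact Measure.dirac.isProbabilityMeasure
  | succ j ih =>
    have : IsProbabilityMeasure ((convPow ψ j).prod ψ) := by infer_instance
    exact Measure.isProbabilityMeasure_map (measurable_fst.add measurable_snd).aemeasurable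

lemma charFn_convPow (ψ : Measure ℝ) [IsProbabilityMeasure ψ] (j : ℕ) (ξ : ℝ) :
    charFn (convPow ψ j) ξ = (charFn ψ ξ) ^ j := by
  induction j with
  | zero =>
    simp [charFn, convPow, integral_dirac]
  | succ j ih =>
    have := convPow_prob ψ j
    rw [show convPow ψ (j+1) = ((convPow ψ j).prod ψ).map (fun p => p.1 + p.2) from rfl]
    unfold charFn
    rw [integral_map measurable_add.aemeasurable
      ((by continuity : Continuous fun x : ℝ => Complex.exp (Complex.I * ξ * x)).aestronglyMeasurable)]
    have heq : ∀ p : ℝ × ℝ, Complex.exp (Complex.I * ξ * (p.1 + p.2)) =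
        Complex.exp (Complex.I * ξ * p.1) * Complex.exp (Complex.I * ξ * p.2) := by
      intro p
      rw [← Complex.exp_add]
      push_cast
      ring_nf
    set_option linter.unusedTactic false in
    push_cast
    calc (∫ p : ℝ × ℝ, Complex.exp (Complex.I * ξ * (p.1 + p.2)) ∂(convPow ψ j).prod ψ)
        = ∫ p : ℝ × ℝ, Complex.exp (Complex.I * ξ * p.1) * Complex.exp (Complex.I * ξ * p.2)
            ∂(convPow ψ j).prod ψ := by
          exact integral_congr_ae (Filter.Eventually.of_forall heq)
      _ = (∫ x, Complex.exp (Complex.I * ξ * x) ∂(convPow ψ j)) *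
            (∫ x, Complex.exp (Complex.I * ξ * x) ∂ψ) := by
          exact integral_prod_mul (fun x : ℝ => Complex.exp (Complex.I * ξ * x))
            (fun x : ℝ => Complex.exp (Complex.I * ξ * x))
      _ = (charFn ψ ξ) ^ (j+1) := by rw [show (∫ x, Complex.exp (Complex.I * ξ * x) ∂(convPow ψ j)) = charFn (convPow ψ j) ξ from rfl, ih, show (∫ x, Complex.exp (Complex.I * ξ * x) ∂ψ) = charFn ψ ξ from rfl]; ring


lemma convPow_supp (ψ : Measure ℝ) [IsProbabilityMeasure ψ]
    (hsupp : ψ (Set.Iio 0) = 0) (j : ℕ) : convPow ψ j (Set.Iio 0) = 0 := by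
  induction j with
  | zero =>
    rw [show convPow ψ 0 = Measure.dirac 0 from rfl, Measure.dirac_apply' _ measurableSet_Iio]
    simp
  | succ j ih =>
    have := convPow_prob ψ j
    rw [show convPow ψ (j+1) = ((convPow ψ j).prod ψ).map (fun p => p.1 + p.2) from rfl,
      Measure.map_apply measurable_add measurableSet_Iio]
    have hsub : (fun p : ℝ × ℝ => p.1 + p.2) ⁻¹' Set.Iio 0 ⊆
        (Set.Iio 0 ×ˢ Set.univ) ∪ (Set.univ ×ˢ Set.Iio 0) := by
      rintro ⟨x, y⟩ h
      simp only [Set.mem_preimage, Set.mem_Iio] at h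
      by_contra hc
      simp only [Set.mem_union, Set.mem_prod, Set.mem_Iio, Set.mem_univ, and_true, true_and,
        not_or, not_lt] at hc
      linarith [hc.1, hc.2]
    refine le_antisymm (le_trans (measure_mono hsub) ?_) zero_le
    refine le_trans (measure_union_le _ _) ?_
    rw [Measure.prod_prod, Measure.prod_prod, ih, hsupp]
    simp

lemma tail_one (ψ : Measure ℝ) [IsProbabilityMeasure ψ]
    (hsupp : ψ (Set.Iio 0) = 0) {x : ℝ} (hx : x < 0) : ψ (Set.Ioi x) = 1 := by
  have h1 : ψ (Set.Iic x) = 0 :=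
    le_antisymm (le_trans (measure_mono (fun y hy => lt_of_le_of_lt hy hx)) hsupp.le) zero_le
  have := measure_add_measure_compl (μ := ψ) (measurableSet_Iic (a := x))
  rw [Set.compl_Iic] at this
  rw [h1, zero_add] at this
  simpa using this

lemma tail_meas (ψ : Measure ℝ) (s : ℝ) :
    Measurable (fun u : ℝ => ψ (Set.Ioi (s - u))) := by
  have h1 : Antitone (fun x : ℝ => ψ (Set.Ioi x)) := fun a b hab =>
    measure_mono (Set.Ioi_subset_Ioi hab)
  exact (h1.measurable).comp (measurable_const.sub measurable_id)

lemma telescope (ψ : Measure ℝ) [IsProbabilityMeasure ψ]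
    (hsupp : ψ (Set.Iio 0) = 0) (j : ℕ) {s : ℝ} (hs : 0 ≤ s) :
    convPow ψ (j+1) (Set.Ioi s) = convPow ψ j (Set.Ioi s)
      + ∫⁻ u in Set.Icc 0 s, ψ (Set.Ioi (s - u)) ∂(convPow ψ j) := by
  have := convPow_prob ψ j
  rw [show convPow ψ (j+1) = ((convPow ψ j).prod ψ).map (fun p => p.1 + p.2) from rfl,
    Measure.map_apply measurable_add measurableSet_Ioi]
  rw [Measure.prod_apply (measurable_add measurableSet_Ioi)]
  have hfib : ∀ u : ℝ, (Prod.mk u ⁻¹' ((fun p : ℝ × ℝ => p.1 + p.2) ⁻¹' Set.Ioi s))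
      = Set.Ioi (s - u) := by
    intro u
    ext v
    simp [Set.mem_preimage, Set.mem_Ioi, sub_lt_iff_lt_add, add_comm, lt_sub_iff_add_lt]
  simp_rw [hfib]
  -- split the integral
  have hsplit : ∫⁻ u, ψ (Set.Ioi (s - u)) ∂(convPow ψ j)
      = (∫⁻ u in Set.Icc 0 s, ψ (Set.Ioi (s - u)) ∂(convPow ψ j))
        + ∫⁻ u in Set.Ioi s, ψ (Set.Ioi (s - u)) ∂(convPow ψ j) := by
    have hcup : Set.Icc 0 s ∪ Set.Ioi s = Set.Ici (0:ℝ) := by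
      ext x; simp only [Set.mem_union, Set.mem_Icc, Set.mem_Ioi, Set.mem_Ici]
      constructor
      · rintro (⟨h1,_⟩|h); exacts [h1, le_trans hs h.le]
      · intro h; rcases le_or_gt x s with h2|h2
        exacts [Or.inl ⟨h, h2⟩, Or.inr h2]
    have h0 : ∫⁻ u, ψ (Set.Ioi (s - u)) ∂(convPow ψ j)
        = ∫⁻ u in Set.Ici 0, ψ (Set.Ioi (s - u)) ∂(convPow ψ j) := by
      rw [← lintegral_add_compl (μ := convPow ψ j)
        (fun u => ψ (Set.Ioi (s - u))) (measurableSet_Ici (a := (0:ℝ)))]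
      have : (convPow ψ j) (Set.Ici (0:ℝ))ᶜ = 0 := by
        rw [Set.compl_Ici]; exact convPow_supp ψ hsupp j
      rw [setLIntegral_measure_zero _ _ this, add_zero]
    rw [h0, ← hcup, lintegral_union measurableSet_Ioi
      (Set.disjoint_left.mpr (fun x hx h2 => absurd hx.2 (not_le.mpr h2)))]
  rw [hsplit]
  have hone : ∫⁻ u in Set.Ioi s, ψ (Set.Ioi (s - u)) ∂(convPow ψ j)
      = convPow ψ j (Set.Ioi s) := by
    rw [setLIntegral_congr_fun measurableSet_Ioi
      ((fun u hu =>
        tail_one ψ hsupp (by simp only [Set.mem_Ioi] at hu; linarith)))]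
    simp
  rw [hone, add_comm]

noncomputable def realI (ψ : Measure ℝ) (j : ℕ) (s : ℝ) : ℝ :=
  ∫ u in Set.Icc (0 : ℝ) s, (ψ (Set.Ioi (s - u))).toReal ∂(convPow ψ j)

lemma realI_eq (ψ : Measure ℝ) [IsProbabilityMeasure ψ] (j : ℕ) (s : ℝ) :
    realI ψ j s = (∫⁻ u in Set.Icc 0 s, ψ (Set.Ioi (s - u)) ∂(convPow ψ j)).toReal := by
  have := convPow_prob ψ j
  exact integral_toReal ((tail_meas ψ s).aemeasurable)
    (Filter.Eventually.of_forall (fun u => measure_lt_top ψ _))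

lemma realI_nonneg (ψ : Measure ℝ) [IsProbabilityMeasure ψ] (j : ℕ) (s : ℝ) :
    0 ≤ realI ψ j s := by
  rw [realI_eq]; exact ENNReal.toReal_nonneg

lemma lint_ne_top (ψ : Measure ℝ) [IsProbabilityMeasure ψ] (j : ℕ) (s : ℝ) :
    (∫⁻ u in Set.Icc 0 s, ψ (Set.Ioi (s - u)) ∂(convPow ψ j)) ≠ ⊤ := by
  have := convPow_prob ψ j
  refine ne_top_of_le_ne_top ?_ (lintegral_mono (fun u => prob_le_one (μ := ψ)))
  simp only [lintegral_const]
  exact ENNReal.mul_ne_top ENNReal.one_ne_top (measure_ne_top _ _)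

lemma partial_sum (ψ : Measure ℝ) [IsProbabilityMeasure ψ]
    (hsupp : ψ (Set.Iio 0) = 0) {s : ℝ} (hs : 0 ≤ s) (J : ℕ) :
    ∑ j ∈ Finset.range J, realI ψ j s = (convPow ψ J (Set.Ioi s)).toReal := by
  induction J with
  | zero =>
    simp only [Finset.range_zero, Finset.sum_empty]
    rw [show convPow ψ 0 = Measure.dirac 0 from rfl,
      Measure.dirac_apply' _ measurableSet_Ioi]
    simp [Set.indicator, Set.mem_Ioi, not_lt.mpr hs]
  | succ J ih =>
    have := convPow_prob ψ J
    rw [Finset.sum_range_succ, ih, telescope ψ hsupp J hs,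
      ENNReal.toReal_add (measure_ne_top _ _) (lint_ne_top ψ J s), realI_eq]

lemma key_bound (ψ : Measure ℝ) [IsProbabilityMeasure ψ]
    (hsupp : ψ (Set.Iio 0) = 0) {s : ℝ} (hs : 0 ≤ s) {q : ℝ} (hq0 : 0 ≤ q) (hq1 : q ≤ 1)
    (J : ℕ) :
    (∑' j : ℕ, q ^ j * realI ψ j s)
      ≤ (convPow ψ J (Set.Ioi s)).toReal + q ^ J := by
  set T : ℕ → ℝ := fun M => (convPow ψ M (Set.Ioi s)).toReal with hT
  have hTs : ∀ M, ∑ j ∈ Finset.range M, realI ψ j s = T M := fun M => partial_sum ψ hsupp hs M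
  have hT1 : ∀ M, T M ≤ 1 := by
    intro M
    have := convPow_prob ψ M
    exact ENNReal.toReal_le_of_le_ofReal zero_le_one (by simpa using prob_le_one)
  have hT0 : ∀ M, 0 ≤ T M := fun M => ENNReal.toReal_nonneg
  have hTmono : Monotone T := by
    intro a b hab
    rw [← hTs, ← hTs]
    exact Finset.sum_le_sum_of_subset_of_nonneg (Finset.range_subset_range.mpr hab)
      (fun j _ _ => realI_nonneg ψ j s)
  refine Real.tsum_le_of_sum_range_le
    (fun j => mul_nonneg (pow_nonneg hq0 j) (realI_nonneg ψ j s)) ?_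
  intro M
  rcases le_or_gt M J with hMJ | hJM
  · have h1 : ∑ j ∈ Finset.range M, q ^ j * realI ψ j s ≤ ∑ j ∈ Finset.range M, realI ψ j s := by
      refine Finset.sum_le_sum (fun j _ => ?_)
      have := realI_nonneg ψ j s
      nlinarith [pow_le_one₀ hq0 hq1 (n := j)]
    calc ∑ j ∈ Finset.range M, q ^ j * realI ψ j s ≤ T M := by rw [← hTs]; exact h1
      _ ≤ T J := hTmono hMJ
      _ ≤ T J + q ^ J := le_add_of_nonneg_right (pow_nonneg hq0 J)
  · have hsplit : ∑ j ∈ Finset.range M, q ^ j * realI ψ j s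
        = ∑ j ∈ Finset.range J, q ^ j * realI ψ j s
          + ∑ j ∈ Finset.Ico J M, q ^ j * realI ψ j s := by
      simp only [Finset.range_eq_Ico]
      rw [← Finset.sum_Ico_consecutive _ (Nat.zero_le J) hJM.le]
    rw [hsplit]
    have h1 : ∑ j ∈ Finset.range J, q ^ j * realI ψ j s ≤ T J := by
      rw [← hTs J]
      refine Finset.sum_le_sum (fun j _ => ?_)
      have := realI_nonneg ψ j s
      nlinarith [pow_le_one₀ hq0 hq1 (n := j)]
    have h2 : ∑ j ∈ Finset.Ico J M, q ^ j * realI ψ j s ≤ q ^ J := by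
      have step1 : ∑ j ∈ Finset.Ico J M, q ^ j * realI ψ j s
          ≤ ∑ j ∈ Finset.Ico J M, q ^ J * realI ψ j s := by
        refine Finset.sum_le_sum (fun j hj => ?_)
        have hj' : J ≤ j := (Finset.mem_Ico.mp hj).1
        exact mul_le_mul_of_nonneg_right (pow_le_pow_of_le_one hq0 hq1 hj')
          (realI_nonneg ψ j s)
      have step2 : ∑ j ∈ Finset.Ico J M, realI ψ j s ≤ 1 := by
        have : ∑ j ∈ Finset.Ico J M, realI ψ j s = T M - T J := by
          rw [← hTs, ← hTs]
          simp only [Finset.range_eq_Ico]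
          rw [← Finset.sum_Ico_consecutive _ (Nat.zero_le J) hJM.le]
          ring
        rw [this]
        linarith [hT1 M, hT0 J]
      calc ∑ j ∈ Finset.Ico J M, q ^ j * realI ψ j s
          ≤ q ^ J * ∑ j ∈ Finset.Ico J M, realI ψ j s := by
            rw [Finset.mul_sum]; exact step1
        _ ≤ q ^ J * 1 := mul_le_mul_of_nonneg_left step2 (pow_nonneg hq0 J)
        _ = q ^ J := mul_one _
    linarith

lemma truncation (μ : Measure ℝ) [IsProbabilityMeasure μ] {T b : ℝ} (hT : 0 < T)
    (hb : ∀ u ∈ Set.Ioc (0:ℝ) T, 1 - (charFn μ u).re ≤ b) :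
    (μ (Set.Ici (2/T))).toReal ≤ 2 * b := by
  classical
  set F : ℝ → ℝ := fun x => ∫ u in Set.Ioc (0:ℝ) T, (1 - Real.cos (u * x)) with hF
  have hcont : Continuous (fun z : ℝ × ℝ => 1 - Real.cos (z.1 * z.2)) := by fun_prop
  have hbound2 : ∀ θ : ℝ, ‖1 - Real.cos θ‖ ≤ 2 := by
    intro θ
    rw [Real.norm_eq_abs, abs_le]
    constructor <;> nlinarith [Real.cos_le_one θ, Real.neg_one_le_cos θ]
  -- product integrability
  have hprodInt : Integrable (fun z : ℝ × ℝ => 1 - Real.cos (z.1 * z.2))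
      ((volume.restrict (Set.Ioc (0:ℝ) T)).prod μ) := by
    refine Integrable.mono' (integrable_const 2) hcont.aestronglyMeasurable ?_
    exact Filter.Eventually.of_forall (fun z => hbound2 _)
  -- Fubini
  have hswap : ∫ x, F x ∂μ
      = ∫ u in Set.Ioc (0:ℝ) T, (∫ x, (1 - Real.cos (u * x)) ∂μ) := by
    rw [hF]
    exact (integral_integral_swap hprodInt).symm
  -- the inner integral equals 1 - Re charFn
  have hinner : ∀ u : ℝ, (∫ x, (1 - Real.cos (u * x)) ∂μ) = 1 - (charFn μ u).re := by
    intro u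
    have hintexp : Integrable (fun x : ℝ => Complex.exp (Complex.I * u * x)) μ := by
      refine Integrable.mono' (integrable_const 1)
        ((by fun_prop : Continuous fun x : ℝ => Complex.exp (Complex.I * u * x)).aestronglyMeasurable) ?_
      refine Filter.Eventually.of_forall (fun x => ?_)
      rw [Complex.norm_exp]
      simp [Complex.mul_re, Complex.mul_im]
    have hre : (charFn μ u).re = ∫ x, Real.cos (u * x) ∂μ := by
      have hre0 := integral_re hintexp
      simp only [RCLike.re_to_complex] at hre0
      rw [charFn, ← hre0]
      refine integral_congr_ae (Filter.Eventually.of_forall (fun x => ?_))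
      show (Complex.exp (Complex.I * u * x)).re = Real.cos (u * x)
      rw [Complex.exp_re]
      have h1 : (Complex.I * u * x).re = 0 := by simp [Complex.mul_re, Complex.mul_im]
      have h2 : (Complex.I * u * x).im = u * x := by simp [Complex.mul_re, Complex.mul_im]
      rw [h1, h2, Real.exp_zero, one_mul]
    have hcosInt : Integrable (fun x : ℝ => Real.cos (u * x)) μ := by
      refine Integrable.mono' (integrable_const 1)
        ((by fun_prop : Continuous fun x : ℝ => Real.cos (u * x)).aestronglyMeasurable) ?_
      exact Filter.Eventually.of_forall (fun x => by
        rw [Real.norm_eq_abs]; exact Real.abs_cos_le_one _)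
    rw [integral_sub (integrable_const 1) hcosInt, hre]
    simp
  -- nonnegativity of F
  have hFnonneg : ∀ x, 0 ≤ F x := by
    intro x
    refine setIntegral_nonneg measurableSet_Ioc (fun u _ => ?_)
    nlinarith [Real.cos_le_one (u * x)]
  -- measurability and integrability of F wrt μ
  have hFmeas : StronglyMeasurable F := by
    have : StronglyMeasurable (fun z : ℝ × ℝ => 1 - Real.cos (z.2 * z.1)) :=
      (by fun_prop : Continuous (fun z : ℝ × ℝ => 1 - Real.cos (z.2 * z.1))).stronglyMeasurable
    exact this.integral_prod_right'
  have hFbdd : ∀ x, ‖F x‖ ≤ 2 * T := by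
    intro x
    have := norm_integral_le_of_norm_le_const (μ := volume.restrict (Set.Ioc (0:ℝ) T))
      (f := fun u => 1 - Real.cos (u * x)) (C := 2)
      (Filter.Eventually.of_forall (fun u => hbound2 _))
    rw [measureReal_def, Measure.restrict_apply_univ, Real.volume_Ioc] at this
    calc ‖F x‖ ≤ 2 * (ENNReal.ofReal (T - 0)).toReal := this
      _ ≤ 2 * T := by rw [ENNReal.toReal_ofReal (by linarith)]; linarith
  have hFint : Integrable F μ := by
    refine Integrable.mono' (integrable_const (2 * T)) hFmeas.aestronglyMeasurable ?_
    exact Filter.Eventually.of_forall hFbdd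
  -- lower bound for F on Ici (2/T)
  have hFlow : ∀ x ∈ Set.Ici (2 / T), T / 2 ≤ F x := by
    intro x hx
    have hx0 : 0 < x := lt_of_lt_of_le (by positivity) hx
    have hxT : 2 ≤ x * T := by
      rw [Set.mem_Ici, div_le_iff₀ hT] at hx
      linarith
    have hF_eval : F x = T - Real.sin (T * x) / x := by
      show (∫ u in Set.Ioc (0:ℝ) T, (1 - Real.cos (u * x))) = T - Real.sin (T * x) / x
      have h1 : ∫ u in Set.Ioc (0:ℝ) T, (1 - Real.cos (u * x))
          = ∫ u in (0:ℝ)..T, (1 - Real.cos (u * x)) := by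
        rw [intervalIntegral.integral_of_le hT.le]
      rw [h1]
      have hderiv : ∀ u ∈ Set.uIcc (0:ℝ) T, HasDerivAt (fun u => u - Real.sin (u * x) / x)
          (1 - Real.cos (u * x)) u := by
        intro u _
        have h2 : HasDerivAt (fun u : ℝ => u * x) x u := by
          simpa using (hasDerivAt_id u).mul_const x
        have h3 : HasDerivAt (fun u : ℝ => Real.sin (u * x)) (Real.cos (u * x) * x) u :=
          h2.sin
        have h4 := (h3.div_const x).const_sub 0
        have h5 := (hasDerivAt_id u).sub (h3.div_const x)
        convert h5 using 1
        exacts [rfl, rfl, rfl, by field_simp]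
      rw [intervalIntegral.integral_eq_sub_of_hasDerivAt hderiv ?_]
      · simp
      · exact (by fun_prop : Continuous fun u : ℝ => 1 - Real.cos (u * x)).intervalIntegrable _ _
    rw [hF_eval]
    have hsin : Real.sin (T * x) / x ≤ 1 / x := by
      gcongr
      exact Real.sin_le_one _
    have h1x : 1 / x ≤ T / 2 := by
      rw [div_le_div_iff₀ hx0 (by norm_num : (0:ℝ) < 2)]
      linarith
    linarith
  -- upper bound for the integral of F
  have hGmeas : StronglyMeasurable (fun u : ℝ => ∫ x, (1 - Real.cos (u * x)) ∂μ) :=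
    hcont.stronglyMeasurable.integral_prod_right'
  have hGint : IntegrableOn (fun u : ℝ => ∫ x, (1 - Real.cos (u * x)) ∂μ)
      (Set.Ioc (0:ℝ) T) volume := by
    refine Integrable.mono' (integrable_const 2) hGmeas.aestronglyMeasurable ?_
    refine Filter.Eventually.of_forall (fun u => ?_)
    have := norm_integral_le_of_norm_le_const (μ := μ)
      (f := fun x => 1 - Real.cos (u * x)) (C := 2)
      (Filter.Eventually.of_forall (fun x => hbound2 _))
    simpa using this
  have hupper : ∫ x, F x ∂μ ≤ T * b := by
    rw [hswap]
    have h1 : ∫ u in Set.Ioc (0:ℝ) T, (∫ x, (1 - Real.cos (u * x)) ∂μ)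
        ≤ ∫ u in Set.Ioc (0:ℝ) T, b := by
      refine setIntegral_mono_on hGint (integrableOn_const ?_) measurableSet_Ioc ?_
      · rw [Real.volume_Ioc]; exact ENNReal.ofReal_ne_top
      · intro u hu
        rw [hinner u]
        exact hb u hu
    calc ∫ u in Set.Ioc (0:ℝ) T, (∫ x, (1 - Real.cos (u * x)) ∂μ)
        ≤ ∫ u in Set.Ioc (0:ℝ) T, b := h1
      _ = (volume (Set.Ioc (0:ℝ) T)).toReal • b := setIntegral_const b
      _ = T * b := by
          rw [Real.volume_Ioc, ENNReal.toReal_ofReal (by linarith), smul_eq_mul, sub_zero]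
  -- lower bound
  have hlower : (T / 2) * (μ (Set.Ici (2 / T))).toReal ≤ ∫ x, F x ∂μ := by
    have h2 : ∫ x in Set.Ici (2 / T), (T / 2) ∂μ ≤ ∫ x in Set.Ici (2 / T), F x ∂μ := by
      refine setIntegral_mono_on (integrableOn_const ?_) hFint.integrableOn
        measurableSet_Ici hFlow
      exact measure_ne_top _ _
    have h3 : ∫ x in Set.Ici (2 / T), F x ∂μ ≤ ∫ x, F x ∂μ :=
      setIntegral_le_integral hFint (Filter.Eventually.of_forall hFnonneg)
    calc (T / 2) * (μ (Set.Ici (2 / T))).toReal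
        = ∫ x in Set.Ici (2 / T), (T / 2) ∂μ := by
          rw [setIntegral_const, smul_eq_mul, mul_comm, measureReal_def]
      _ ≤ ∫ x, F x ∂μ := le_trans h2 h3
  nlinarith [hlower, hupper]

lemma one_sub_cos_le_abs (b : ℝ) : 1 - Real.cos b ≤ |b| := by
  have hc : Real.cos b = 1 - 2 * Real.sin (b/2)^2 := by
    rw [show b = 2*(b/2) by ring, Real.cos_two_mul']
    have := Real.sin_sq_add_cos_sq (b/2)
    ring_nf
    ring_nf at this ⊢
    nlinarith
  have h2 : |Real.sin (b/2)| ≤ |b/2| := Real.abs_sin_le_abs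
  have h3 : |Real.sin (b/2)| ≤ 1 := Real.abs_sin_le_one _
  have h4 : Real.sin (b/2)^2 = |Real.sin (b/2)|^2 := (sq_abs _).symm
  have h5 : |b/2| = |b|/2 := by rw [abs_div]; norm_num
  nlinarith [abs_nonneg (Real.sin (b/2))]

lemma one_sub_exp_cos_le {A B : ℝ} (hA : 0 ≤ A) :
    1 - Real.exp (-A) * Real.cos B ≤ A + |B| := by
  have h1 : 1 - Real.exp (-A) ≤ A := by
    have := Real.add_one_le_exp (-A)
    linarith
  have h2 : Real.exp (-A) ≤ 1 := Real.exp_le_one_iff.mpr (by linarith)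
  have h3 : 0 ≤ 1 - Real.cos B := by nlinarith [Real.cos_le_one B]
  have h4 := one_sub_cos_le_abs B
  have h5 : 0 < Real.exp (-A) := Real.exp_pos _
  nlinarith

lemma re_exp_pow_bound (α : ℝ) (c : ℝ) {u : ℝ} (hu : 0 < u) (J : ℕ) :
    1 - ((Complex.exp (-(|u| ^ α : ℝ) * (1 - Complex.I * (c * Real.sign u)))) ^ J).re
      ≤ (J : ℝ) * u ^ α * (1 + |c|) := by
  have hsign : Real.sign u = 1 := Real.sign_of_pos hu
  have habs : |u| = u := abs_of_pos hu
  simp only [hsign, habs, Complex.ofReal_one, mul_one]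
  set a := u ^ α with ha
  have ha0 : 0 ≤ a := Real.rpow_nonneg hu.le α
  rw [← Complex.exp_nat_mul]
  rw [Complex.exp_re]
  have hre : ((J : ℂ) * (-(a:ℂ) * (1 - Complex.I * (c : ℝ)))).re = -((J:ℝ) * a) := by
    simp [Complex.mul_re, Complex.mul_im]
    try ring
  have him : ((J : ℂ) * (-(a:ℂ) * (1 - Complex.I * (c : ℝ)))).im = (J:ℝ) * a * c := by
    simp [Complex.mul_re, Complex.mul_im]
    try ring
  rw [hre, him]
  have hJa : 0 ≤ (J:ℝ) * a := mul_nonneg (Nat.cast_nonneg J) ha0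
  have := one_sub_exp_cos_le (A := (J:ℝ)*a) (B := (J:ℝ)*a*c) hJa
  have habs2 : |(J:ℝ) * a * c| ≤ (J:ℝ) * a * |c| := by
    rw [abs_mul, abs_of_nonneg hJa]
  calc 1 - Real.exp (-((J:ℝ)*a)) * Real.cos ((J:ℝ)*a*c)
      ≤ (J:ℝ)*a + |(J:ℝ)*a*c| := this
    _ ≤ (J:ℝ)*a + (J:ℝ)*a*|c| := by linarith
    _ = (J:ℝ)*a*(1+|c|) := by ring


lemma main_bound (ψ : Measure ℝ) [IsProbabilityMeasure ψ]
    (hsupp : ψ (Set.Iio 0) = 0) (α : ℝ) (hα0 : 0 < α)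
    (hchar : ∀ ξ : ℝ, charFn ψ ξ =
      Complex.exp (-(|ξ| ^ α : ℝ) * (1 - Complex.I * (Real.tan (π * α / 2) * Real.sign ξ))))
    (k n J : ℕ) (hkn : k ≤ n) (hn : 0 < n) {s : ℝ} (hs : 0 < s) :
    pauseF ψ k n s ≤ 2 * ((J:ℝ) * (2/s) ^ α * (1 + |Real.tan (π * α / 2)|))
      + (1 - (k:ℝ)/n) ^ J := by
  set c := Real.tan (π * α / 2) with hc
  have hn' : (0:ℝ) < n := Nat.cast_pos.mpr hn
  have hq0 : 0 ≤ 1 - (k:ℝ)/n := by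
    have : (k:ℝ)/n ≤ 1 := (div_le_one hn').mpr (Nat.cast_le.mpr hkn)
    linarith
  have hq1 : 1 - (k:ℝ)/n ≤ 1 := by
    have : 0 ≤ (k:ℝ)/n := by positivity
    linarith
  have hkey := key_bound ψ hsupp hs.le hq0 hq1 J
  have hps : pauseF ψ k n s = ∑' j : ℕ, (1 - (k:ℝ)/n) ^ j * realI ψ j s := rfl
  rw [hps]
  refine le_trans hkey (add_le_add_left ?_ _)
  -- tail bound via truncation
  have hprob := convPow_prob ψ J
  set T : ℝ := 2 / s with hTdef
  have hT : 0 < T := by positivity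
  have hb : ∀ u ∈ Set.Ioc (0:ℝ) T, 1 - (charFn (convPow ψ J) u).re
      ≤ (J:ℝ) * T ^ α * (1 + |c|) := by
    intro u hu
    rw [charFn_convPow, hchar u]
    refine le_trans (re_exp_pow_bound α c hu.1 J) ?_
    have hu' : u ^ α ≤ T ^ α := Real.rpow_le_rpow hu.1.le hu.2 hα0.le
    have hC : 0 ≤ 1 + |c| := by positivity
    have hJ : (0:ℝ) ≤ J := Nat.cast_nonneg J
    exact mul_le_mul_of_nonneg_right (mul_le_mul_of_nonneg_left hu' hJ) hC
  have htr := truncation (convPow ψ J) hT hb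
  have h2T : 2 / T = s := by
    rw [hTdef]
    field_simp
  rw [h2T] at htr
  refine le_trans ?_ htr
  exact ENNReal.toReal_mono (measure_ne_top _ _)
    (measure_mono Set.Ioi_subset_Ici_self)

lemma pauseF_nonneg (ψ : Measure ℝ) [IsProbabilityMeasure ψ]
    (k n : ℕ) (hkn : k ≤ n) (hn : 0 < n) (s : ℝ) : 0 ≤ pauseF ψ k n s := by
  have hn' : (0:ℝ) < n := Nat.cast_pos.mpr hn
  have hq0 : 0 ≤ 1 - (k:ℝ)/n := by
    have : (k:ℝ)/n ≤ 1 := (div_le_one hn').mpr (Nat.cast_le.mpr hkn)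
    linarith
  refine tsum_nonneg (fun j => mul_nonneg (pow_nonneg hq0 j) ?_)
  exact integral_nonneg (fun u => ENNReal.toReal_nonneg)

/-- for the one-sided α-stable pausing time, if `θ_n / n^{1/α} → ∞`, then
`f(k, n, t θ_n) → 0` for every integer `k ≥ 2` and `t > 0`. -/
theorem stable_pauseF_limit_super_scaling
    (α : ℝ) (hα : α ∈ Set.Ioo (0 : ℝ) 1)
    (ψ : Measure ℝ) [IsProbabilityMeasure ψ]
    (hsupp : ψ (Set.Iio 0) = 0)
    (hchar : ∀ ξ : ℝ, charFn ψ ξ =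
      Complex.exp (-(|ξ| ^ α : ℝ) * (1 - Complex.I * (Real.tan (π * α / 2) * Real.sign ξ))))
    (θ : ℕ → ℝ) (hθ : ∀ n, 0 < θ n)
    (hscale : Tendsto (fun n : ℕ => θ n / (n : ℝ) ^ (1 / α)) atTop atTop)
    (k : ℕ) (hk : 2 ≤ k) (t : ℝ) (ht : 0 < t) :
    Tendsto (fun n : ℕ => pauseF ψ k n (t * θ n)) atTop (𝓝 0) := by
  obtain ⟨hα0, hα1⟩ := hα
  set c := Real.tan (π * α / 2) with hc
  set C : ℝ := 1 + |c| with hC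
  have hCpos : 0 < C := by positivity
  -- n / θ n ^ α → 0
  have h1 : Tendsto (fun n : ℕ => (θ n / (n:ℝ) ^ (1/α)) ^ α) atTop atTop :=
    (tendsto_rpow_atTop hα0).comp hscale
  have h2 : ∀ᶠ n : ℕ in atTop, (θ n / (n:ℝ) ^ (1/α)) ^ α = (θ n) ^ α / n := by
    filter_upwards [Filter.eventually_ge_atTop 1] with n hn
    rw [Real.div_rpow (hθ n).le (Real.rpow_nonneg (Nat.cast_nonneg n) _),
      ← Real.rpow_mul (Nat.cast_nonneg n), one_div_mul_cancel hα0.ne', Real.rpow_one]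
  have h3 : Tendsto (fun n : ℕ => (θ n) ^ α / n) atTop atTop := h1.congr' h2
  have h4 : Tendsto (fun n : ℕ => (n:ℝ) / (θ n) ^ α) atTop (𝓝 0) := by
    have := h3.inv_tendsto_atTop
    refine this.congr (fun n => ?_)
    simp only [Pi.inv_apply, inv_div]
  rw [Metric.tendsto_atTop]
  intro ε hε
  -- choose m
  have hr : Tendsto (fun m : ℕ => (Real.exp (-2)) ^ m) atTop (𝓝 0) :=
    tendsto_pow_atTop_nhds_zero_of_lt_one (Real.exp_pos _).le
      (Real.exp_lt_one_iff.mpr (by norm_num))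
  obtain ⟨m, hm⟩ := (hr.eventually (eventually_lt_nhds (by linarith : (0:ℝ) < ε/2))).exists
  -- the main term tends to 0
  have hA : Tendsto (fun n : ℕ => 2 * (((n:ℝ) * m) * (2/(t * θ n)) ^ α * C)) atTop (𝓝 0) := by
    have heq : ∀ᶠ n : ℕ in atTop,
        2 * (((n:ℝ) * m) * (2/(t * θ n)) ^ α * C)
          = (2 * m * C * (2 ^ α / t ^ α)) * ((n:ℝ) / (θ n) ^ α) := by
      filter_upwards with n
      have h5 : (2/(t * θ n)) ^ α = 2 ^ α / (t ^ α * (θ n) ^ α) := by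
        rw [Real.div_rpow (by norm_num) (mul_pos ht (hθ n)).le,
          Real.mul_rpow ht.le (hθ n).le]
      rw [h5]
      field_simp
    have h6 := h4.const_mul (2 * m * C * (2 ^ α / t ^ α))
    rw [mul_zero] at h6
    refine Tendsto.congr' ?_ h6
    filter_upwards [heq] with n hn
    exact hn.symm
  have hAev := hA.eventually (eventually_lt_nhds (by linarith : (0:ℝ) < ε/2))
  have hev : ∀ᶠ n : ℕ in atTop, dist (pauseF ψ k n (t * θ n)) 0 < ε := by
    filter_upwards [hAev, Filter.eventually_ge_atTop (k+1)] with n hAn hnk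
    have hn0 : 0 < n := lt_of_lt_of_le (Nat.succ_pos k) hnk
    have hkn : k ≤ n := le_trans (Nat.le_succ k) hnk
    have hn' : (0:ℝ) < n := Nat.cast_pos.mpr hn0
    have hs : 0 < t * θ n := mul_pos ht (hθ n)
    -- geometric term bound
    have hq0 : 0 ≤ 1 - (k:ℝ)/n := by
      have : (k:ℝ)/n ≤ 1 := (div_le_one hn').mpr (Nat.cast_le.mpr hkn)
      linarith
    have hgeo : (1 - (k:ℝ)/n) ^ (n*m) ≤ (Real.exp (-2)) ^ m := by
      have hle : 1 - (k:ℝ)/n ≤ Real.exp (-((k:ℝ)/n)) := by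
        have := Real.add_one_le_exp (-((k:ℝ)/n))
        linarith
      calc (1 - (k:ℝ)/n) ^ (n*m) ≤ (Real.exp (-((k:ℝ)/n))) ^ (n*m) :=
            pow_le_pow_left₀ hq0 hle _
        _ = Real.exp (((n*m : ℕ):ℝ) * (-((k:ℝ)/n))) := by
            rw [Real.exp_nat_mul]
        _ ≤ Real.exp (((m:ℝ)) * (-2)) := by
            apply Real.exp_le_exp.mpr
            push_cast
            rw [show (n:ℝ) * m * (-((k:ℝ)/n)) = -((m:ℝ) * k) * ((n:ℝ)/n) by ring,
              div_self hn'.ne', mul_one]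
            have hk' : (2:ℝ) ≤ k := by exact_mod_cast hk
            nlinarith [Nat.cast_nonneg (α := ℝ) m]
        _ = (Real.exp (-2)) ^ m := by rw [← Real.exp_nat_mul]
    -- main bound
    have hmb := main_bound ψ hsupp α hα0 hchar k n (n*m) hkn hn0 hs
    have hnn := pauseF_nonneg ψ k n hkn hn0 (t * θ n)
    rw [Real.dist_eq, sub_zero, abs_of_nonneg hnn]
    have hcast : ((n*m : ℕ):ℝ) = (n:ℝ) * m := by push_cast; ring
    calc pauseF ψ k n (t * θ n)
        ≤ 2 * (((n*m : ℕ):ℝ) * (2/(t * θ n)) ^ α * C) + (1 - (k:ℝ)/n) ^ (n*m) := hmb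
      _ ≤ 2 * (((n:ℝ) * m) * (2/(t * θ n)) ^ α * C) + (Real.exp (-2)) ^ m := by
          rw [hcast]; linarith
      _ < ε/2 + ε/2 := add_lt_add hAn hm
      _ = ε := by ring

  exact Filter.eventually_atTop.mp hev
end

section
/- Let ψ be a probability measure on ℝ concentrated on [0,∞) with ψ((0,∞)) > 0. Then for every s ≥ 0, Σ_{j=0}^∞ ∫_{[0,s]} ψ((s−u, ∞)) ψ^{*j}(du) = 1. -/
open MeasureTheory Real Filter Topology

open Set ENNReal
set_option linter.unusedSectionVars false

section aux
variable (ψ : Measure ℝ) [IsProbabilityMeasure ψ]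

instance convPow_prob_s18 (j : ℕ) : IsProbabilityMeasure (convPow ψ j) := by
  induction j with
  | zero => rw [convPow]; infer_instance
  | succ j ih =>
    rw [convPow]
    exact Measure.isProbabilityMeasure_map measurable_add.aemeasurable

lemma convPow_Iio (hsupp : ψ (Set.Iio 0) = 0) (j : ℕ) : convPow ψ j (Set.Iio 0) = 0 := by
  induction j with
  | zero => simp [convPow]
  | succ j ih =>
    rw [convPow, Measure.map_apply measurable_add measurableSet_Iio,
      Measure.prod_apply (measurable_add measurableSet_Iio)]
    have hae : ∀ᵐ u ∂(convPow ψ j), 0 ≤ u := by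
      rw [ae_iff]; convert ih using 2; ext u; simp
    rw [← lintegral_zero (μ := convPow ψ j)]
    refine lintegral_congr_ae ?_
    filter_upwards [hae] with u hu
    refine measure_mono_null ?_ hsupp
    intro y hy
    simp only [Set.mem_preimage, Set.mem_Iio] at hy ⊢
    linarith
end aux

section aux2
variable (ψ : Measure ℝ) [IsProbabilityMeasure ψ]

lemma convPow_succ_Icc (hsupp : ψ (Set.Iio 0) = 0) (j : ℕ) (s : ℝ) :
    convPow ψ (j + 1) (Set.Icc 0 s) =
      ∫⁻ u in Set.Icc (0:ℝ) s, ψ (Set.Iic (s - u)) ∂(convPow ψ j) := by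
  rw [show convPow ψ (j+1) = ((convPow ψ j).prod ψ).map (fun p => p.1 + p.2) from rfl,
    Measure.map_apply measurable_add measurableSet_Icc,
    Measure.prod_apply (measurable_add measurableSet_Icc),
    ← lintegral_indicator measurableSet_Icc]
  have hae : ∀ᵐ u ∂(convPow ψ j), 0 ≤ u := by
    rw [ae_iff]; convert convPow_Iio ψ hsupp j using 2; ext u; simp
  refine lintegral_congr_ae ?_
  filter_upwards [hae] with u hu
  by_cases hmem : u ∈ Set.Icc (0:ℝ) s
  · rw [Set.indicator_of_mem hmem]
    have hset : (Prod.mk u ⁻¹' ((fun p : ℝ × ℝ => p.1 + p.2) ⁻¹' Set.Icc 0 s))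
        = Set.Icc (-u) (s - u) := by
      ext y; simp only [Set.mem_preimage, Set.mem_Icc]; constructor <;> intro h <;>
        constructor <;> linarith [h.1, h.2]
    rw [hset]
    refine le_antisymm (measure_mono Set.Icc_subset_Iic_self) ?_
    have hsub : Set.Iic (s - u) ⊆ Set.Iio (-u) ∪ Set.Icc (-u) (s - u) := by
      intro y hy
      simp only [Set.mem_Iic] at hy
      rcases lt_or_ge y (-u) with h | h
      · exact Or.inl h
      · exact Or.inr ⟨h, hy⟩
    calc ψ (Set.Iic (s - u)) ≤ ψ (Set.Iio (-u)) + ψ (Set.Icc (-u) (s - u)) :=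
          le_trans (measure_mono hsub) (measure_union_le _ _)
      _ = ψ (Set.Icc (-u) (s - u)) := by
          rw [measure_mono_null (fun y hy => ?_) hsupp, zero_add]
          simp only [Set.mem_Iio] at hy ⊢; linarith
  · rw [Set.indicator_of_notMem hmem]
    have hus : s < u := by
      simp only [Set.mem_Icc, not_and, not_le] at hmem; exact hmem hu
    refine measure_mono_null (fun y hy => ?_) hsupp
    simp only [Set.mem_preimage, Set.mem_Icc] at hy
    simp only [Set.mem_Iio]
    linarith [hy.2]
end aux2

section aux3
variable (ψ : Measure ℝ) [IsProbabilityMeasure ψ]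

lemma term_eq (hsupp : ψ (Set.Iio 0) = 0) (j : ℕ) (s : ℝ) :
    ∫ u in Set.Icc (0 : ℝ) s, (ψ (Set.Ioi (s - u))).toReal ∂(convPow ψ j)
      = (convPow ψ j (Set.Icc 0 s)).toReal - (convPow ψ (j+1) (Set.Icc 0 s)).toReal := by
  set μ := convPow ψ j
  have hanti : Antitone (fun u : ℝ => ψ (Set.Iic (s - u))) := by
    intro u v huv
    exact measure_mono (Set.Iic_subset_Iic.2 (by linarith))
  have hmeas : Measurable (fun u : ℝ => ψ (Set.Iic (s - u))) := hanti.measurable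
  have hgmeas : Measurable (fun u : ℝ => (ψ (Set.Iic (s - u))).toReal) :=
    hmeas.ennreal_toReal
  have hgint : Integrable (fun u : ℝ => (ψ (Set.Iic (s - u))).toReal)
      (μ.restrict (Set.Icc 0 s)) := by
    refine Integrable.mono' (integrable_const (1:ℝ)) hgmeas.aestronglyMeasurable ?_
    refine Filter.Eventually.of_forall fun u => ?_
    rw [Real.norm_eq_abs, abs_of_nonneg ENNReal.toReal_nonneg]
    exact ENNReal.toReal_le_of_le_ofReal zero_le_one (by simpa using prob_le_one)
  have hpt : ∀ u : ℝ, (ψ (Set.Ioi (s - u))).toReal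
      = 1 - (ψ (Set.Iic (s - u))).toReal := by
    intro u
    rw [← Set.compl_Iic, prob_compl_eq_one_sub measurableSet_Iic,
      ENNReal.toReal_sub_of_le prob_le_one ENNReal.one_ne_top, ENNReal.toReal_one]
  calc ∫ u in Set.Icc (0 : ℝ) s, (ψ (Set.Ioi (s - u))).toReal ∂μ
      = ∫ u in Set.Icc (0 : ℝ) s, (1 - (ψ (Set.Iic (s - u))).toReal) ∂μ := by
        exact integral_congr_ae (Filter.Eventually.of_forall fun u => hpt u)
    _ = (∫ _ in Set.Icc (0 : ℝ) s, (1:ℝ) ∂μ)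
        - ∫ u in Set.Icc (0 : ℝ) s, (ψ (Set.Iic (s - u))).toReal ∂μ :=
        integral_sub (integrable_const 1) hgint
    _ = (convPow ψ j (Set.Icc 0 s)).toReal - (convPow ψ (j+1) (Set.Icc 0 s)).toReal := by
        congr 1
        · simp [Measure.restrict_apply_univ]; rfl
        · rw [convPow_succ_Icc ψ hsupp j s]
          rw [← integral_toReal hmeas.aemeasurable
            (Filter.Eventually.of_forall fun u => measure_lt_top ψ _)]

lemma a_antitone (hsupp : ψ (Set.Iio 0) = 0) (j : ℕ) (s : ℝ) :
    convPow ψ (j+1) (Set.Icc 0 s) ≤ convPow ψ j (Set.Icc 0 s) := by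
  rw [convPow_succ_Icc ψ hsupp j s]
  calc ∫⁻ u in Set.Icc (0:ℝ) s, ψ (Set.Iic (s - u)) ∂(convPow ψ j)
      ≤ ∫⁻ _ in Set.Icc (0:ℝ) s, 1 ∂(convPow ψ j) :=
        lintegral_mono fun u => prob_le_one
    _ = convPow ψ j (Set.Icc 0 s) := by simp
end aux3

section aux4
variable (ψ : Measure ℝ) [IsProbabilityMeasure ψ]

noncomputable def gexp : ℝ → ℝ≥0∞ := fun x => ENNReal.ofReal (Real.exp (-x))

lemma gexp_meas : Measurable gexp :=
  ENNReal.measurable_ofReal.comp (Real.continuous_exp.comp continuous_neg).measurable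

lemma exists_delta (hnontriv : 0 < ψ (Set.Ioi 0)) :
    ∃ δ : ℝ, 0 < δ ∧ 0 < ψ (Set.Ioi δ) := by
  by_contra h
  push_neg at h
  have hz : ∀ n : ℕ, ψ (Set.Ioi (1 / ((n:ℝ) + 1))) = 0 := fun n =>
    le_antisymm (h _ (by positivity)) (by simp)
  have hsub : Set.Ioi (0:ℝ) ⊆ ⋃ n : ℕ, Set.Ioi (1 / ((n:ℝ) + 1)) := by
    intro x hx
    simp only [Set.mem_Ioi] at hx
    obtain ⟨n, hn⟩ := exists_nat_one_div_lt hx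
    exact Set.mem_iUnion.2 ⟨n, hn⟩
  have : ψ (Set.Ioi 0) = 0 :=
    measure_mono_null hsub (measure_iUnion_null hz)
  rw [this] at hnontriv; exact lt_irrefl _ hnontriv

lemma L_lt_one (hsupp : ψ (Set.Iio 0) = 0) (hnontriv : 0 < ψ (Set.Ioi 0)) :
    ∫⁻ x, gexp x ∂ψ < 1 := by
  obtain ⟨δ, hδ, hc⟩ := exists_delta ψ hnontriv
  set h : ℝ → ℝ≥0∞ := fun x => if x ≤ δ then 1 else ENNReal.ofReal (Real.exp (-δ)) with hh
  have hae : ∀ᵐ x ∂ψ, 0 ≤ x := by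
    rw [ae_iff]; convert hsupp using 2; ext u; simp
  have hle : ∫⁻ x, gexp x ∂ψ ≤ ∫⁻ x, h x ∂ψ := by
    refine lintegral_mono_ae ?_
    filter_upwards [hae] with x hx
    by_cases hxδ : x ≤ δ
    · simp only [hh, hxδ, if_true]
      exact ENNReal.ofReal_le_one.2 (Real.exp_le_one_iff.2 (by linarith))
    · simp only [hh, hxδ, if_false]
      exact ENNReal.ofReal_le_ofReal (Real.exp_le_exp.2 (by push_neg at hxδ; linarith))
  have hcalc : ∫⁻ x, h x ∂ψ
      = ψ (Set.Iic δ) + ENNReal.ofReal (Real.exp (-δ)) * ψ (Set.Ioi δ) := by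
    rw [← lintegral_add_compl (fun x => h x) measurableSet_Iic (μ := ψ), Set.compl_Iic]
    congr 1
    · calc ∫⁻ x in Set.Iic δ, h x ∂ψ = ∫⁻ _ in Set.Iic δ, (1:ℝ≥0∞) ∂ψ :=
          setLIntegral_congr_fun measurableSet_Iic
            (fun x hx => by
              simp [hh, Set.mem_Iic.1 hx])
        _ = ψ (Set.Iic δ) := by simp
    · calc ∫⁻ x in Set.Ioi δ, h x ∂ψ
          = ∫⁻ _ in Set.Ioi δ, ENNReal.ofReal (Real.exp (-δ)) ∂ψ :=
          setLIntegral_congr_fun measurableSet_Ioi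
            (fun x hx => by
              simp [hh, not_le.2 (Set.mem_Ioi.1 hx)])
        _ = ENNReal.ofReal (Real.exp (-δ)) * ψ (Set.Ioi δ) := by
          rw [setLIntegral_const]
  have hlt : ψ (Set.Iic δ) + ENNReal.ofReal (Real.exp (-δ)) * ψ (Set.Ioi δ)
      < ψ (Set.Iic δ) + 1 * ψ (Set.Ioi δ) := by
    refine ENNReal.add_lt_add_left (measure_ne_top ψ _) ?_
    rw [mul_comm (ENNReal.ofReal _), mul_comm (1:ℝ≥0∞)]
    refine ENNReal.mul_lt_mul_right (ne_of_gt hc) (measure_ne_top ψ _) ?_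
    exact ENNReal.ofReal_lt_one.2 (Real.exp_lt_one_iff.2 (by linarith))
  have hone : ψ (Set.Iic δ) + ψ (Set.Ioi δ) = 1 := by
    rw [← Set.compl_Iic, measure_add_measure_compl measurableSet_Iic, measure_univ]
  calc ∫⁻ x, gexp x ∂ψ ≤ _ := hle
    _ = _ := hcalc
    _ < ψ (Set.Iic δ) + 1 * ψ (Set.Ioi δ) := hlt
    _ = 1 := by rw [one_mul, hone]

lemma gexp_lintegral (j : ℕ) :
    ∫⁻ x, gexp x ∂(convPow ψ j) = (∫⁻ x, gexp x ∂ψ) ^ j := by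
  induction j with
  | zero =>
    rw [show convPow ψ 0 = Measure.dirac 0 from rfl, lintegral_dirac' _ gexp_meas]
    simp [gexp]
  | succ j ih =>
    rw [show convPow ψ (j+1) = ((convPow ψ j).prod ψ).map (fun p => p.1 + p.2) from rfl,
      lintegral_map gexp_meas measurable_add]
    have hpt : ∀ p : ℝ × ℝ, gexp (p.1 + p.2) = gexp p.1 * gexp p.2 := by
      intro p
      simp only [gexp, neg_add, Real.exp_add]
      rw [ENNReal.ofReal_mul (Real.exp_nonneg _)]
    calc ∫⁻ p : ℝ × ℝ, gexp (p.1 + p.2) ∂((convPow ψ j).prod ψ)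
        = ∫⁻ p : ℝ × ℝ, gexp p.1 * gexp p.2 ∂((convPow ψ j).prod ψ) := by
          exact lintegral_congr fun p => hpt p
      _ = (∫⁻ x, gexp x ∂(convPow ψ j)) * ∫⁻ x, gexp x ∂ψ :=
          lintegral_prod_mul gexp_meas.aemeasurable gexp_meas.aemeasurable
      _ = (∫⁻ x, gexp x ∂ψ) ^ (j + 1) := by rw [ih, pow_succ]

lemma chernoff (j : ℕ) (s : ℝ) :
    convPow ψ j (Set.Icc 0 s) ≤ ENNReal.ofReal (Real.exp s) * (∫⁻ x, gexp x ∂ψ) ^ j := by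
  have hbd : ∀ x : ℝ, (Set.Icc (0:ℝ) s).indicator (fun _ => (1:ℝ≥0∞)) x
      ≤ ENNReal.ofReal (Real.exp s) * gexp x := by
    intro x
    by_cases hx : x ∈ Set.Icc (0:ℝ) s
    · rw [Set.indicator_of_mem hx]
      have : ENNReal.ofReal (Real.exp s) * gexp x = ENNReal.ofReal (Real.exp (s - x)) := by
        simp only [gexp]
        rw [← ENNReal.ofReal_mul (Real.exp_nonneg _), ← Real.exp_add]
        ring_nf
      rw [this]
      exact ENNReal.one_le_ofReal.2 (Real.one_le_exp (by linarith [hx.2]))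
    · rw [Set.indicator_of_notMem hx]; simp
  calc convPow ψ j (Set.Icc 0 s)
      = ∫⁻ x, (Set.Icc (0:ℝ) s).indicator (fun _ => (1:ℝ≥0∞)) x ∂(convPow ψ j) := by
        rw [lintegral_indicator measurableSet_Icc]; simp
    _ ≤ ∫⁻ x, ENNReal.ofReal (Real.exp s) * gexp x ∂(convPow ψ j) :=
        lintegral_mono hbd
    _ = ENNReal.ofReal (Real.exp s) * (∫⁻ x, gexp x ∂ψ) ^ j := by
        rw [lintegral_const_mul _ gexp_meas, gexp_lintegral]

lemma a_tendsto_zero (hsupp : ψ (Set.Iio 0) = 0) (hnontriv : 0 < ψ (Set.Ioi 0)) (s : ℝ) :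
    Tendsto (fun j => (convPow ψ j (Set.Icc 0 s)).toReal) atTop (𝓝 0) := by
  set L := ∫⁻ x, gexp x ∂ψ with hL
  have hL1 : L < 1 := L_lt_one ψ hsupp hnontriv
  have hLtop : L ≠ ⊤ := ne_top_of_lt (lt_of_lt_of_le hL1 le_top)
  have hLr : L.toReal < 1 := by
    have := ENNReal.toReal_strict_mono ENNReal.one_ne_top hL1
    simpa using this
  have hbound : ∀ j, (convPow ψ j (Set.Icc 0 s)).toReal ≤ Real.exp s * L.toReal ^ j := by
    intro j
    have h1 := chernoff ψ j s
    have h2 : (ENNReal.ofReal (Real.exp s) * L ^ j).toReal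
        = Real.exp s * L.toReal ^ j := by
      rw [ENNReal.toReal_mul, ENNReal.toReal_pow, ENNReal.toReal_ofReal (Real.exp_nonneg _)]
    calc (convPow ψ j (Set.Icc 0 s)).toReal
        ≤ (ENNReal.ofReal (Real.exp s) * L ^ j).toReal :=
          ENNReal.toReal_mono (by
            exact ENNReal.mul_ne_top ENNReal.ofReal_ne_top (ENNReal.pow_ne_top hLtop)) h1
      _ = _ := h2
  have htend : Tendsto (fun j : ℕ => Real.exp s * L.toReal ^ j) atTop (𝓝 0) := by
    have := tendsto_pow_atTop_nhds_zero_of_lt_one ENNReal.toReal_nonneg hLr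
    simpa using this.const_mul (Real.exp s)
  exact squeeze_zero (fun j => ENNReal.toReal_nonneg) hbound htend
end aux4


/-- the renewal probabilities sum to `1`:
`Σ_{j=0}^∞ ∫_{[0,s]} ψ((s−u, ∞)) ψ^{*j}(du) = 1` for every `s ≥ 0`. -/
theorem renewal_probabilities_sum_to_one
    (ψ : Measure ℝ) [IsProbabilityMeasure ψ]
    (hsupp : ψ (Set.Iio 0) = 0) (hnontriv : 0 < ψ (Set.Ioi 0))
    (s : ℝ) (hs : 0 ≤ s) :
    ∑' j : ℕ, ∫ u in Set.Icc (0 : ℝ) s, (ψ (Set.Ioi (s - u))).toReal ∂(convPow ψ j) = 1 := by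
  set a : ℕ → ℝ := fun j => (convPow ψ j (Set.Icc 0 s)).toReal with ha
  have hterm : ∀ j, ∫ u in Set.Icc (0:ℝ) s, (ψ (Set.Ioi (s - u))).toReal ∂(convPow ψ j)
      = a j - a (j+1) := fun j => term_eq ψ hsupp j s
  have hnonneg : ∀ j, 0 ≤ a j - a (j+1) := fun j =>
    sub_nonneg.2 (ENNReal.toReal_mono (measure_ne_top _ _) (a_antitone ψ hsupp j s))
  have ha0 : a 0 = 1 := by
    have : convPow ψ 0 (Set.Icc 0 s) = 1 := by
      rw [show convPow ψ 0 = Measure.dirac 0 from rfl,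
        Measure.dirac_apply' _ measurableSet_Icc,
        Set.indicator_of_mem (Set.mem_Icc.2 ⟨le_refl 0, hs⟩)]
      rfl
    simp [ha, this]
  have htend := a_tendsto_zero ψ hsupp hnontriv s
  have hsum : HasSum (fun j => a j - a (j+1)) 1 := by
    rw [hasSum_iff_tendsto_nat_of_nonneg hnonneg]
    have heq : (fun n => ∑ i ∈ Finset.range n, (a i - a (i+1))) = fun n => a 0 - a n := by
      funext n; exact Finset.sum_range_sub' a n
    rw [heq]
    have := (tendsto_const_nhds (x := a 0) (f := atTop (α := ℕ))).sub htend
    simpa [ha0] using this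
  rw [tsum_congr hterm, hsum.tsum_eq]
end
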